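/- arXiv:2102.03153 — 4 statements merged into one kernel-verified Lean document; each statement's English description precedes it below -/
import Mathlib

section
/- Let X be a 3×3 complex matrix with columns x₀,x₁,x₂ ∈ ℂ³, let ⟨·,·⟩ be the standard complex bilinear form on ℂ³ (no conjugation), let L = {v ∈ ℂ³ : ⟨v,v⟩ = 0}, and let W = XᵀX. Then ker(Xᵀ) ∩ L = {0} if and only if rank W ≥ 2. -/
open Matrix Module

noncomputable def dpL (v : Fin 3 → ℂ) : (Fin 3 → ℂ) →ₗ[ℂ] ℂ where
  toFun w := v ⬝ᵥ w
  map_add' a b := dotProduct_add v a b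
  map_smul' c a := dotProduct_smul c v a

theorem dpL_ker (v : Fin 3 → ℂ) (hv : v ≠ 0) :
    finrank ℂ (LinearMap.ker (dpL v)) = 2 := by
  have hsurj : Function.Surjective (dpL v) := by
    obtain ⟨i, hi⟩ := Function.ne_iff.mp hv
    intro c
    refine ⟨(c / v i) • (Pi.single i 1 : Fin 3 → ℂ), ?_⟩
    rw [_root_.map_smul]
    have h1 : dpL v (Pi.single i 1 : Fin 3 → ℂ) = v i := by
      show v ⬝ᵥ _ = v i
      rw [dotProduct_single, mul_one]
    rw [h1, smul_eq_mul]
    exact div_mul_cancel₀ c (by simpa using hi)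
  have h1 : LinearMap.range (dpL v) = ⊤ := LinearMap.range_eq_top.mpr hsurj
  have h2 := LinearMap.finrank_range_add_finrank_ker (dpL v)
  rw [h1] at h2
  simp [finrank_top] at h2
  omega

theorem exists_isotropic (K : Submodule ℂ (Fin 3 → ℂ)) (hK : 2 ≤ finrank ℂ K) :
    ∃ v ∈ K, v ≠ 0 ∧ v ⬝ᵥ v = 0 := by
  let b := finBasis ℂ K
  let i0 : Fin (finrank ℂ K) := ⟨0, by omega⟩
  let i1 : Fin (finrank ℂ K) := ⟨1, by omega⟩
  set a : Fin 3 → ℂ := (b i0 : Fin 3 → ℂ) with ha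
  set c : Fin 3 → ℂ := (b i1 : Fin 3 → ℂ) with hc
  have key : ∀ s t : ℂ, s • a + t • c = 0 → s = 0 ∧ t = 0 := by
    intro s t hst
    have hK0 : s • b i0 + t • b i1 = 0 := by
      apply Subtype.ext
      simpa using hst
    have := congrArg b.repr hK0
    rw [map_add, _root_.map_smul, _root_.map_smul, b.repr_self, b.repr_self, map_zero] at this
    constructor
    · have h0 := DFunLike.congr_fun this i0
      simpa [Finsupp.single_apply, show i1 ≠ i0 by simp [i0, i1, Fin.ext_iff]] using h0
    · have h1 := DFunLike.congr_fun this i1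
      simpa [Finsupp.single_apply, show i0 ≠ i1 by simp [i0, i1, Fin.ext_iff]] using h1
  by_cases hcc : c ⬝ᵥ c = 0
  · refine ⟨c, (b i1).2, ?_, hcc⟩
    intro h0
    have := (key 0 1 (by rw [h0]; simp)).2
    norm_num at this
  · set α := a ⬝ᵥ a
    set β := c ⬝ᵥ c
    set γ := a ⬝ᵥ c
    obtain ⟨s, hs⟩ := IsAlgClosed.exists_pow_nat_eq (γ ^ 2 - α * β) (n := 2) (by norm_num)
    set t := (s - γ) / β
    refine ⟨a + t • c, K.add_mem (b i0).2 (K.smul_mem t (b i1).2), ?_, ?_⟩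
    · intro h0
      have := (key 1 t (by rw [← h0]; ring_nf; module)).1
      norm_num at this
    · have hdc : c ⬝ᵥ a = γ := dotProduct_comm c a
      rw [dotProduct_add, add_dotProduct, add_dotProduct, dotProduct_smul, smul_dotProduct,
        smul_dotProduct, dotProduct_smul, hdc]
      show α + t * γ + (t * γ + t * (t * β)) = 0
      have hβ : β ≠ 0 := hcc
      field_simp [t]
      simp only [t]
      field_simp
      linear_combination hs

theorem rank_nullity3 (A : Matrix (Fin 3) (Fin 3) ℂ) :
    A.rank + finrank ℂ (LinearMap.ker A.mulVecLin) = 3 := by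
  have h := LinearMap.finrank_range_add_finrank_ker A.mulVecLin
  rw [Matrix.rank]
  simpa using h

theorem stmt0 (X : Matrix (Fin 3) (Fin 3) ℂ) :
    {v : Fin 3 → ℂ | Xᵀ.mulVec v = 0 ∧ v ⬝ᵥ v = 0} = {0} ↔ 2 ≤ (Xᵀ * X).rank := by
  have hrnX := rank_nullity3 X
  have hrnXT := rank_nullity3 Xᵀ
  have hrnW := rank_nullity3 (Xᵀ * X)
  have hXT : Xᵀ.rank = X.rank := Matrix.rank_transpose X
  constructor
  · intro h
    have hX2 : 2 ≤ X.rank := by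
      by_contra h2
      push_neg at h2
      have hker : 2 ≤ finrank ℂ (LinearMap.ker Xᵀ.mulVecLin) := by omega
      obtain ⟨v, hvK, hv0, hviso⟩ := exists_isotropic _ hker
      have hm : v ∈ ({0} : Set (Fin 3 → ℂ)) := by
        rw [← h]
        exact ⟨hvK, hviso⟩
      exact hv0 hm
    have hkerEq : LinearMap.ker (Xᵀ * X).mulVecLin = LinearMap.ker X.mulVecLin := by
      apply le_antisymm
      · intro v hv
        rw [LinearMap.mem_ker, Matrix.mulVecLin_apply] at hv ⊢
        set w := X.mulVec v with hw
        have h1 : Xᵀ.mulVec w = 0 := by rw [hw, Matrix.mulVec_mulVec]; exact hv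
        have h2 : w ⬝ᵥ w = 0 := by
          rw [hw, Matrix.dotProduct_mulVec, ← Matrix.mulVec_transpose, h1, zero_dotProduct]
        have hm : w ∈ ({0} : Set (Fin 3 → ℂ)) := by rw [← h]; exact ⟨h1, h2⟩
        exact hm
      · intro v hv
        rw [LinearMap.mem_ker, Matrix.mulVecLin_apply] at hv ⊢
        rw [← Matrix.mulVec_mulVec, hv, Matrix.mulVec_zero]
    rw [hkerEq] at hrnW
    omega
  · intro h
    ext v
    simp only [Set.mem_setOf_eq, Set.mem_singleton_iff]
    constructor
    · rintro ⟨hker, hiso⟩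
      by_contra hv0
      have hXr2 : 2 ≤ X.rank := le_trans h (Matrix.rank_mul_le_right Xᵀ X)
      have hvK : v ∈ LinearMap.ker Xᵀ.mulVecLin := hker
      have hk1 : 1 ≤ finrank ℂ (LinearMap.ker Xᵀ.mulVecLin) := by
        by_contra hle
        push_neg at hle
        interval_cases hfr : finrank ℂ (LinearMap.ker Xᵀ.mulVecLin)
        · have : LinearMap.ker Xᵀ.mulVecLin = ⊥ := Submodule.finrank_eq_zero.mp hfr
          rw [this] at hvK
          exact hv0 (by simpa using hvK)
      have hXrank2 : X.rank = 2 := by omega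
      have hsub : LinearMap.range X.mulVecLin ≤ LinearMap.ker (dpL v) := by
        rintro w ⟨u, rfl⟩
        show v ⬝ᵥ X.mulVecLin u = 0
        rw [Matrix.mulVecLin_apply, Matrix.dotProduct_mulVec, ← Matrix.mulVec_transpose, hker,
          zero_dotProduct]
      have hrange : LinearMap.range X.mulVecLin = LinearMap.ker (dpL v) := by
        apply Submodule.eq_of_le_of_finrank_eq hsub
        rw [dpL_ker v hv0]
        exact hXrank2 ▸ rfl
      have hvrange : v ∈ LinearMap.range X.mulVecLin := by
        rw [hrange]
        exact hiso
      obtain ⟨u, hu⟩ := hvrange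
      rw [Matrix.mulVecLin_apply] at hu
      have huW : u ∈ LinearMap.ker (Xᵀ * X).mulVecLin := by
        rw [LinearMap.mem_ker, Matrix.mulVecLin_apply, ← Matrix.mulVec_mulVec, hu]
        exact hker
      have huX : u ∉ LinearMap.ker X.mulVecLin := by
        intro hu0
        rw [LinearMap.mem_ker, Matrix.mulVecLin_apply, hu] at hu0
        exact hv0 hu0
      have hlt : LinearMap.ker X.mulVecLin < LinearMap.ker (Xᵀ * X).mulVecLin := by
        rw [SetLike.lt_iff_le_and_exists]
        refine ⟨?_, u, huW, huX⟩
        intro z hz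
        rw [LinearMap.mem_ker, Matrix.mulVecLin_apply] at hz ⊢
        rw [← Matrix.mulVec_mulVec, hz, Matrix.mulVec_zero]
      have := Submodule.finrank_lt_finrank_of_lt hlt
      omega
    · rintro rfl
      exact ⟨Matrix.mulVec_zero _, zero_dotProduct _⟩
end

section
/- Let X, Y be 3×3 complex matrices with XᵀX = YᵀY, det X = det Y, and suppose ker(Xᵀ) ∩ L = {0}, where L = {v ∈ ℂ³ : ⟨v,v⟩ = 0} for the standard complex bilinear form. Then there exists a unique S ∈ SO(3,ℂ) such that Y = S·X. -/
open Matrix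

section aux
variable {u v w : Fin 3 → ℂ} {A : Matrix (Fin 3) (Fin 3) ℂ}

lemma aux_mul_vecMulVec (A : Matrix (Fin 3) (Fin 3) ℂ) (u v : Fin 3 → ℂ) :
    A * vecMulVec u v = vecMulVec (A.mulVec u) v := by
  ext i j
  simp only [mul_apply, vecMulVec_apply, mulVec, dotProduct, Finset.sum_mul]
  exact Finset.sum_congr rfl (fun k _ => by ring)

lemma aux_vecMulVec_mul (A : Matrix (Fin 3) (Fin 3) ℂ) (u v : Fin 3 → ℂ) :
    vecMulVec u v * A = vecMulVec u (Aᵀ.mulVec v) := by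
  ext i j
  simp only [mul_apply, vecMulVec_apply, mulVec, dotProduct, transpose_apply]
  rw [Finset.mul_sum]
  exact Finset.sum_congr rfl (fun k _ => by ring)

lemma aux_vecMulVec_mulVec (u v w : Fin 3 → ℂ) :
    (vecMulVec u v).mulVec w = (v ⬝ᵥ w) • u := by
  ext i
  simp only [vecMulVec_apply, mulVec, dotProduct, Pi.smul_apply, smul_eq_mul]
  rw [Finset.sum_mul]
  exact Finset.sum_congr rfl (fun k _ => by ring)

lemma aux_vecMulVec_transpose (u v : Fin 3 → ℂ) : (vecMulVec u v)ᵀ = vecMulVec v u := by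
  ext i j; simp [vecMulVec_apply, mul_comm]

lemma aux_det_one_add_vecMulVec (u v : Fin 3 → ℂ) :
    (1 + vecMulVec u v).det = 1 + v ⬝ᵥ u := by
  rw [vecMulVec_eq (Fin 1), det_one_add_replicateCol_mul_replicateRow]
end aux

lemma aux_vecMulVec_smul_left (c : ℂ) (u v : Fin 3 → ℂ) :
    vecMulVec (c • u) v = c • vecMulVec u v := by
  ext i j; simp [vecMulVec_apply, mul_assoc]

lemma aux_vecMulVec_zero_left (v : Fin 3 → ℂ) : vecMulVec (0 : Fin 3 → ℂ) v = 0 := by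
  ext i j; simp [vecMulVec_apply]

lemma aux_vecMulVec_zero_right (v : Fin 3 → ℂ) : vecMulVec v (0 : Fin 3 → ℂ) = 0 := by
  ext i j; simp [vecMulVec_apply]

-- transpose-mulVec of the perturbed matrix
lemma aux_pert_transpose_mulVec (A : Matrix (Fin 3) (Fin 3) ℂ) {w : Fin 3 → ℂ} (m : Fin 3 → ℂ)
    (hw : Aᵀ.mulVec w = 0) (hww : w ⬝ᵥ w = 1) :
    (A + vecMulVec w m)ᵀ.mulVec w = m := by
  rw [transpose_add, aux_vecMulVec_transpose, add_mulVec, hw, aux_vecMulVec_mulVec, hww,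
    one_smul, zero_add]

-- Gram matrix of the perturbed matrix
lemma aux_pert_gram (A : Matrix (Fin 3) (Fin 3) ℂ) {w : Fin 3 → ℂ} (m : Fin 3 → ℂ)
    (hw : Aᵀ.mulVec w = 0) (hww : w ⬝ᵥ w = 1) :
    (A + vecMulVec w m)ᵀ * (A + vecMulVec w m) = Aᵀ * A + vecMulVec m m := by
  rw [transpose_add, aux_vecMulVec_transpose, add_mul, mul_add, mul_add,
    aux_mul_vecMulVec, hw, aux_vecMulVec_zero_left, aux_vecMulVec_mul, hw,
    aux_vecMulVec_zero_right, aux_vecMulVec_mul, aux_vecMulVec_transpose,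
    aux_vecMulVec_mulVec, hww, one_smul]
  abel

-- flipping the sign of the rank-one perturbation flips the determinant
lemma aux_flip (A : Matrix (Fin 3) (Fin 3) ℂ) {w : Fin 3 → ℂ} (m : Fin 3 → ℂ)
    (hw : Aᵀ.mulVec w = 0) (hww : w ⬝ᵥ w = 1) :
    (A - vecMulVec w m).det = -((A + vecMulVec w m).det) := by
  have hM : (1 + vecMulVec (-(2:ℂ) • w) w) * (A + vecMulVec w m) = A - vecMulVec w m := by
    rw [add_mul, one_mul, aux_vecMulVec_mul, aux_pert_transpose_mulVec A m hw hww,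
      aux_vecMulVec_smul_left]
    ext i j
    simp [vecMulVec_apply]
    ring
  have hdM : (1 + vecMulVec (-(2:ℂ) • w) w).det = -1 := by
    rw [aux_det_one_add_vecMulVec, dotProduct_smul, hww]
    norm_num
  rw [← hM, det_mul, hdM]
  ring

-- any two elements of ker Xᵀ are dependent, given hker
lemma aux_ker_dep (X : Matrix (Fin 3) (Fin 3) ℂ)
    (hker : {v : Fin 3 → ℂ | Xᵀ.mulVec v = 0 ∧ v ⬝ᵥ v = 0} = {0})
    {a b : Fin 3 → ℂ} (ha : Xᵀ.mulVec a = 0) (hb : Xᵀ.mulVec b = 0) (ha0 : a ≠ 0) :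
    ∃ c : ℂ, b = c • a := by
  have hmem : ∀ v : Fin 3 → ℂ, Xᵀ.mulVec v = 0 → v ⬝ᵥ v = 0 → v = 0 := by
    intro v h1 h2
    have : v ∈ ({0} : Set (Fin 3 → ℂ)) := hker ▸ (Set.mem_setOf.mpr ⟨h1, h2⟩)
    simpa using this
  have haa : a ⬝ᵥ a ≠ 0 := fun h => ha0 (hmem a ha h)
  set e : Fin 3 → ℂ := b - ((a ⬝ᵥ b) / (a ⬝ᵥ a)) • a with he
  have hXe : Xᵀ.mulVec e = 0 := by
    rw [he, mulVec_sub, mulVec_smul, ha, hb, smul_zero, sub_zero]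
  have hae : a ⬝ᵥ e = 0 := by
    rw [he, dotProduct_sub, dotProduct_smul, smul_eq_mul, div_mul_cancel₀ _ haa, sub_self]
  by_cases he0 : e = 0
  · exact ⟨(a ⬝ᵥ b) / (a ⬝ᵥ a), by rw [← sub_eq_zero]; exact he ▸ he0⟩
  · exfalso
    have hee : e ⬝ᵥ e ≠ 0 := fun h => he0 (hmem e hXe h)
    obtain ⟨s, hs⟩ := IsAlgClosed.exists_pow_nat_eq (k := ℂ) (e ⬝ᵥ e) zero_lt_two
    obtain ⟨t, ht⟩ := IsAlgClosed.exists_pow_nat_eq (k := ℂ) (-(a ⬝ᵥ a)) zero_lt_two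
    have hs0 : s ≠ 0 := fun h => hee (by rw [← hs, h]; ring)
    have ht0 : t ≠ 0 := by
      intro h
      apply haa
      have : -(a ⬝ᵥ a) = 0 := by rw [← ht, h]; ring
      linear_combination -this
    set w : Fin 3 → ℂ := s • a + t • e with hw
    have hXw : Xᵀ.mulVec w = 0 := by
      rw [hw, mulVec_add, mulVec_smul, mulVec_smul, ha, hXe, smul_zero, smul_zero, add_zero]
    have hww : w ⬝ᵥ w = 0 := by
      rw [hw]
      simp only [dotProduct_add, add_dotProduct, dotProduct_smul, smul_dotProduct, smul_eq_mul]
      rw [dotProduct_comm e a, hae]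
      linear_combination (a ⬝ᵥ a) * hs + (e ⬝ᵥ e) * ht
    have hw0 : w = 0 := hmem w hXw hww
    have : e ⬝ᵥ w = 0 := by rw [hw0, dotProduct_zero]
    rw [hw, dotProduct_add, dotProduct_smul, dotProduct_smul, dotProduct_comm e a, hae] at this
    simp only [smul_eq_mul, mul_zero, zero_add] at this
    exact (mul_ne_zero ht0 hee) this

-- invertible case
lemma aux_inv_case (X Y : Matrix (Fin 3) (Fin 3) ℂ) (hX : IsUnit X.det)
    (hW : Xᵀ * X = Yᵀ * Y) (hdet : X.det = Y.det) :
    ∃! S : Matrix (Fin 3) (Fin 3) ℂ, Sᵀ * S = 1 ∧ S.det = 1 ∧ Y = S * X := by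
  have hXT : IsUnit Xᵀ.det := by rwa [det_transpose]
  refine ⟨Y * X⁻¹, ⟨?_, ?_, ?_⟩, ?_⟩
  · rw [transpose_mul, transpose_nonsing_inv]
    have : Xᵀ⁻¹ * (Yᵀ * (Y * X⁻¹)) = Xᵀ⁻¹ * (Xᵀ * (X * X⁻¹)) := by
      rw [← mul_assoc Yᵀ, ← hW, mul_assoc]
    rw [mul_assoc, this, nonsing_inv_mul_cancel_left _ _ hXT, mul_nonsing_inv _ hX]
  · rw [det_mul, det_nonsing_inv, ← hdet]
    rw [Ring.inverse_eq_inv]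
    exact mul_inv_cancel₀ (IsUnit.ne_zero hX)
  · rw [mul_assoc, nonsing_inv_mul _ hX, mul_one]
  · rintro T ⟨-, -, h3⟩
    rw [h3, mul_assoc, mul_nonsing_inv _ hX, mul_one]

lemma aux_kerX_dep (X : Matrix (Fin 3) (Fin 3) ℂ)
    (hker : {v : Fin 3 → ℂ | Xᵀ.mulVec v = 0 ∧ v ⬝ᵥ v = 0} = {0})
    {u : Fin 3 → ℂ} (hu : Xᵀ.mulVec u = 0) (hu0 : u ≠ 0)
    {n : Fin 3 → ℂ} (hn : X.mulVec n = 0) (hn0 : n ≠ 0)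
    {v : Fin 3 → ℂ} (hv : X.mulVec v = 0) : ∃ c : ℂ, v = c • n := by
  have hkerT : LinearMap.ker Xᵀ.mulVecLin ≤ Submodule.span ℂ {u} := by
    intro w hw
    rw [LinearMap.mem_ker, mulVecLin_apply] at hw
    obtain ⟨c, hc⟩ := aux_ker_dep X hker hu hw hu0
    exact Submodule.mem_span_singleton.mpr ⟨c, hc.symm⟩
  have hT1 : Module.finrank ℂ (LinearMap.ker Xᵀ.mulVecLin) ≤ 1 :=
    le_trans (Submodule.finrank_mono hkerT) (by rw [finrank_span_singleton hu0])
  have hrn : Xᵀ.rank + Module.finrank ℂ (LinearMap.ker Xᵀ.mulVecLin) = 3 := by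
    have := LinearMap.finrank_range_add_finrank_ker Xᵀ.mulVecLin
    rwa [Module.finrank_pi ℂ, Fintype.card_fin] at this
  have hrk : 2 ≤ X.rank := by
    rw [← X.rank_transpose]; omega
  have hrn2 : X.rank + Module.finrank ℂ (LinearMap.ker X.mulVecLin) = 3 := by
    have := LinearMap.finrank_range_add_finrank_ker X.mulVecLin
    rwa [Module.finrank_pi ℂ, Fintype.card_fin] at this
  have hkX : Module.finrank ℂ (LinearMap.ker X.mulVecLin) ≤ 1 := by omega
  have hsn : Submodule.span ℂ {n} ≤ LinearMap.ker X.mulVecLin := by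
    rw [Submodule.span_le, Set.singleton_subset_iff]
    exact LinearMap.mem_ker.mpr (by rw [mulVecLin_apply]; exact hn)
  have heq : Submodule.span ℂ {n} = LinearMap.ker X.mulVecLin := by
    apply Submodule.eq_of_le_of_finrank_le hsn
    rw [finrank_span_singleton hn0]; exact hkX
  have hvmem : v ∈ Submodule.span ℂ ({n} : Set (Fin 3 → ℂ)) := by
    rw [heq]; exact LinearMap.mem_ker.mpr (by rw [mulVecLin_apply]; exact hv)
  obtain ⟨c, hc⟩ := Submodule.mem_span_singleton.mp hvmem
  exact ⟨c, hc.symm⟩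

lemma aux_aniso (X Y : Matrix (Fin 3) (Fin 3) ℂ)
    (hW : Xᵀ * X = Yᵀ * Y)
    (hker : {v : Fin 3 → ℂ | Xᵀ.mulVec v = 0 ∧ v ⬝ᵥ v = 0} = {0})
    {u : Fin 3 → ℂ} (hu : Xᵀ.mulVec u = 0) (hu0 : u ≠ 0)
    {n : Fin 3 → ℂ} (hn : X.mulVec n = 0) (hn0 : n ≠ 0) (hYn : Y.mulVec n = 0)
    {u' : Fin 3 → ℂ} (hu' : Yᵀ.mulVec u' = 0) (hu'0 : u' ≠ 0) :
    u' ⬝ᵥ u' ≠ 0 := by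
  have hmem : ∀ v : Fin 3 → ℂ, Xᵀ.mulVec v = 0 → v ⬝ᵥ v = 0 → v = 0 := by
    intro v h1 h2
    have : v ∈ ({0} : Set (Fin 3 → ℂ)) := hker ▸ (Set.mem_setOf.mpr ⟨h1, h2⟩)
    simpa using this
  -- key: any w with (XᵀX) w = 0 satisfies X w = 0
  have hkey : ∀ w : Fin 3 → ℂ, Yᵀ.mulVec (Y.mulVec w) = 0 → X.mulVec w = 0 := by
    intro w hw
    have h1 : Xᵀ.mulVec (X.mulVec w) = 0 := by
      rw [mulVec_mulVec, hW, ← mulVec_mulVec]; exact hw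
    have h2 : (X.mulVec w) ⬝ᵥ (X.mulVec w) = 0 := by
      rw [dotProduct_mulVec, ← mulVec_transpose, h1, zero_dotProduct]
    exact hmem _ h1 h2
  intro h0
  by_cases hmem' : u' ∈ LinearMap.range Y.mulVecLin
  · obtain ⟨v, hv⟩ := hmem'
    rw [mulVecLin_apply] at hv
    have hYYv : Yᵀ.mulVec (Y.mulVec v) = 0 := by rw [hv]; exact hu'
    have hXv : X.mulVec v = 0 := hkey v hYYv
    obtain ⟨c, hc⟩ := aux_kerX_dep X hker hu hu0 hn hn0 hXv
    apply hu'0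
    rw [← hv, hc, mulVec_smul, hYn, smul_zero]
  · -- u' ∉ range Y, dimension count
    have hkerY : LinearMap.ker Y.mulVecLin = Submodule.span ℂ {n} := by
      apply le_antisymm
      · intro w hw
        rw [LinearMap.mem_ker, mulVecLin_apply] at hw
        have hXw : X.mulVec w = 0 := hkey w (by rw [hw, mulVec_zero])
        obtain ⟨c, hc⟩ := aux_kerX_dep X hker hu hu0 hn hn0 hXw
        exact Submodule.mem_span_singleton.mpr ⟨c, hc.symm⟩
      · rw [Submodule.span_le, Set.singleton_subset_iff]
        exact LinearMap.mem_ker.mpr (by rw [mulVecLin_apply]; exact hYn)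
    have hrY : Module.finrank ℂ (LinearMap.range Y.mulVecLin) = 2 := by
      have h1 := LinearMap.finrank_range_add_finrank_ker Y.mulVecLin
      rw [Module.finrank_pi ℂ, Fintype.card_fin, hkerY, finrank_span_singleton hn0] at h1
      omega
    set q : Submodule ℂ (Fin 3 → ℂ) := LinearMap.range Y.mulVecLin ⊔ Submodule.span ℂ {u'} with hq
    have hlt : LinearMap.range Y.mulVecLin < q := by
      refine lt_of_le_of_ne le_sup_left (fun h => hmem' ?_)
      rw [h]
      exact Submodule.mem_sup_right (Submodule.mem_span_singleton_self u')
    have hq3 : Module.finrank ℂ q = 3 := by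
      have h1 := Submodule.finrank_lt_finrank_of_lt hlt
      have h2 := Submodule.finrank_le q
      rw [Module.finrank_pi ℂ, Fintype.card_fin] at h2
      omega
    have hqtop : q = ⊤ := Submodule.eq_top_of_finrank_eq (by
      rw [hq3, Module.finrank_pi ℂ, Fintype.card_fin])
    have hall : ∀ w : Fin 3 → ℂ, u' ⬝ᵥ w = 0 := by
      intro w
      have hwq : w ∈ q := hqtop ▸ Submodule.mem_top
      obtain ⟨y, hy, z, hz, rfl⟩ := Submodule.mem_sup.mp hwq
      obtain ⟨a, ha⟩ := hy
      obtain ⟨d, hd⟩ := Submodule.mem_span_singleton.mp hz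
      rw [mulVecLin_apply] at ha
      rw [dotProduct_add, ← ha, ← hd, dotProduct_smul, smul_eq_mul, h0, mul_zero, add_zero,
        dotProduct_mulVec, ← mulVec_transpose, hu', zero_dotProduct]
    apply hu'0
    funext i
    have := hall (Pi.single i 1)
    rwa [dotProduct_single, mul_one] at this

-- invertibility of the perturbed matrix
lemma aux_pert_unit (X : Matrix (Fin 3) (Fin 3) ℂ) {u n m : Fin 3 → ℂ}
    (hu : Xᵀ.mulVec u = 0) (huu : u ⬝ᵥ u = 1)
    (hkerX : ∀ v : Fin 3 → ℂ, X.mulVec v = 0 → ∃ c : ℂ, v = c • n)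
    (hmn : m ⬝ᵥ n ≠ 0) :
    IsUnit (X + vecMulVec u m).det := by
  rw [isUnit_iff_ne_zero]
  intro hd
  obtain ⟨v, hv0, hv⟩ := (Matrix.exists_mulVec_eq_zero_iff).mpr hd
  rw [add_mulVec, aux_vecMulVec_mulVec] at hv
  have hudot : u ⬝ᵥ (X.mulVec v) = 0 := by
    rw [dotProduct_mulVec, ← mulVec_transpose, hu, zero_dotProduct]
  have hmv : m ⬝ᵥ v = 0 := by
    have := congrArg (fun w => u ⬝ᵥ w) hv
    simpa [dotProduct_add, hudot, dotProduct_smul, huu] using this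
  have hXv : X.mulVec v = 0 := by
    rw [hmv, zero_smul, add_zero] at hv; exact hv
  obtain ⟨c, rfl⟩ := hkerX v hXv
  rw [dotProduct_smul, smul_eq_mul] at hmv
  rcases mul_eq_zero.mp hmv with h | h
  · exact hv0 (by rw [h, zero_smul])
  · exact hmn h

-- existence of S in the singular case
lemma aux_exist (X Y : Matrix (Fin 3) (Fin 3) ℂ) (hW : Xᵀ * X = Yᵀ * Y)
    {u u' n m : Fin 3 → ℂ}
    (hu : Xᵀ.mulVec u = 0) (huu : u ⬝ᵥ u = 1)
    (hu' : Yᵀ.mulVec u' = 0) (hu'u' : u' ⬝ᵥ u' = 1)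
    (hkerX : ∀ v : Fin 3 → ℂ, X.mulVec v = 0 → ∃ c : ℂ, v = c • n)
    (hmn : m ⬝ᵥ n ≠ 0)
    (hd1 : (Y + vecMulVec u' m).det = (X + vecMulVec u m).det) :
    ∃ S : Matrix (Fin 3) (Fin 3) ℂ, Sᵀ * S = 1 ∧ S.det = 1 ∧ Y = S * X := by
  set X₁ := X + vecMulVec u m with hX₁
  set Y₁ := Y + vecMulVec u' m with hY₁
  have hX1unit : IsUnit X₁.det := aux_pert_unit X hu huu hkerX hmn
  have hW1 : X₁ᵀ * X₁ = Y₁ᵀ * Y₁ := by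
    rw [hX₁, hY₁, aux_pert_gram X m hu huu, aux_pert_gram Y m hu' hu'u', hW]
  obtain ⟨S, ⟨hS1, hS2, hS3⟩, -⟩ := aux_inv_case X₁ Y₁ hX1unit hW1 hd1.symm
  have hSST : S * Sᵀ = 1 := mul_eq_one_comm.mp hS1
  have hXtS : X₁ᵀ * Sᵀ = Y₁ᵀ := by rw [← transpose_mul, ← hS3]
  have hdiff : X₁ᵀ.mulVec (Sᵀ.mulVec u' - u) = 0 := by
    rw [mulVec_sub, mulVec_mulVec, hXtS, aux_pert_transpose_mulVec Y m hu' hu'u',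
      aux_pert_transpose_mulVec X m hu huu, sub_self]
  have hSu' : Sᵀ.mulVec u' = u := by
    by_contra h
    have h0 : Sᵀ.mulVec u' - u ≠ 0 := sub_ne_zero.mpr h
    have : X₁ᵀ.det = 0 := (Matrix.exists_mulVec_eq_zero_iff).mp ⟨_, h0, hdiff⟩
    rw [det_transpose] at this
    exact (isUnit_iff_ne_zero.mp hX1unit) this
  have hSu : S.mulVec u = u' := by
    have : S.mulVec (Sᵀ.mulVec u') = u' := by
      rw [mulVec_mulVec, hSST, one_mulVec]
    rwa [hSu'] at this
  refine ⟨S, hS1, hS2, ?_⟩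
  have : Y + vecMulVec u' m = S * X + vecMulVec u' m := by
    rw [← hY₁, hS3, hX₁, mul_add, aux_mul_vecMulVec, hSu]
  exact add_right_cancel this

-- uniqueness: an orthogonal R with det 1 fixing X is the identity
lemma aux_uniq (X : Matrix (Fin 3) (Fin 3) ℂ)
    (hker : {v : Fin 3 → ℂ | Xᵀ.mulVec v = 0 ∧ v ⬝ᵥ v = 0} = {0})
    {u m : Fin 3 → ℂ} (hu : Xᵀ.mulVec u = 0) (huu : u ⬝ᵥ u = 1)
    (hX1unit : IsUnit (X + vecMulVec u m).det)
    {R : Matrix (Fin 3) (Fin 3) ℂ} (hR : Rᵀ * R = 1) (hRdet : R.det = 1)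
    (hRX : R * X = X) : R = 1 := by
  set X₁ := X + vecMulVec u m with hX₁
  have hu0 : u ≠ 0 := by
    intro h; rw [h, zero_dotProduct] at huu; exact zero_ne_one huu
  have hRRT : R * Rᵀ = 1 := mul_eq_one_comm.mp hR
  have hXRT : Xᵀ.mulVec (Rᵀ.mulVec u) = 0 := by
    have hXt : Xᵀ * Rᵀ = Xᵀ := by rw [← transpose_mul, hRX]
    rw [mulVec_mulVec, hXt, hu]
  obtain ⟨c, hc⟩ := aux_ker_dep X hker hu hXRT hu0
  have hRc : R.mulVec (Rᵀ.mulVec u) = u := by rw [mulVec_mulVec, hRRT, one_mulVec]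
  have hcRu : c • R.mulVec u = u := by
    rw [hc, mulVec_smul] at hRc; exact hRc
  have hc0 : c ≠ 0 := by
    intro h; rw [h, zero_smul] at hcRu; exact hu0 hcRu.symm
  have hRu : R.mulVec u = c⁻¹ • u := by
    have h := congrArg (fun w => c⁻¹ • w) hcRu
    simpa [smul_smul, inv_mul_cancel₀ hc0] using h
  have hc2 : c * c = 1 := by
    have h1 : u ⬝ᵥ Rᵀ.mulVec u = c * (u ⬝ᵥ u) := by rw [hc, dotProduct_smul, smul_eq_mul]
    have h2 : u ⬝ᵥ Rᵀ.mulVec u = (R.mulVec u) ⬝ᵥ u := by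
      rw [dotProduct_mulVec, vecMul_transpose]
    rw [h2, hRu, smul_dotProduct, smul_eq_mul, huu, mul_one] at h1
    field_simp at h1
    linear_combination -h1
  have hcinv : c⁻¹ = c := (eq_inv_of_mul_eq_one_left hc2).symm
  have hRX₁ : R * X₁ = X + c • vecMulVec u m := by
    rw [hX₁, mul_add, hRX, aux_mul_vecMulVec, hRu, hcinv, aux_vecMulVec_smul_left]
  rcases mul_self_eq_one_iff.mp hc2 with h1 | h1
  · rw [h1, one_smul, ← hX₁] at hRX₁
    calc R = R * X₁ * X₁⁻¹ := by rw [mul_assoc, mul_nonsing_inv _ hX1unit, mul_one]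
    _ = X₁ * X₁⁻¹ := by rw [hRX₁]
    _ = 1 := mul_nonsing_inv _ hX1unit
  · exfalso
    rw [h1] at hRX₁
    have hneg : R * X₁ = X - vecMulVec u m := by
      rw [hRX₁, neg_one_smul, sub_eq_add_neg]
    have hdet1 : (R * X₁).det = X₁.det := by rw [det_mul, hRdet, one_mul]
    rw [hneg, aux_flip X m hu huu, ← hX₁] at hdet1
    have : X₁.det = 0 := by linear_combination -hdet1/2
    exact (isUnit_iff_ne_zero.mp hX1unit) this

theorem stmt1 (X Y : Matrix (Fin 3) (Fin 3) ℂ)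
    (hW : Xᵀ * X = Yᵀ * Y) (hdet : X.det = Y.det)
    (hker : {v : Fin 3 → ℂ | Xᵀ.mulVec v = 0 ∧ v ⬝ᵥ v = 0} = {0}) :
    ∃! S : Matrix (Fin 3) (Fin 3) ℂ, Sᵀ * S = 1 ∧ S.det = 1 ∧ Y = S * X := by
  by_cases hX : IsUnit X.det
  · exact aux_inv_case X Y hX hW hdet
  have hdet0 : X.det = 0 := by
    by_contra h; exact hX (isUnit_iff_ne_zero.mpr h)
  have hdetY0 : Y.det = 0 := hdet ▸ hdet0
  have hmem : ∀ v : Fin 3 → ℂ, Xᵀ.mulVec v = 0 → v ⬝ᵥ v = 0 → v = 0 := by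
    intro v h1 h2
    have : v ∈ ({0} : Set (Fin 3 → ℂ)) := hker ▸ (Set.mem_setOf.mpr ⟨h1, h2⟩)
    simpa using this
  -- normalized vector spanning ker Xᵀ
  obtain ⟨u₀, hu₀0, hu₀⟩ := (Matrix.exists_mulVec_eq_zero_iff).mpr
    (show Xᵀ.det = 0 by rw [det_transpose]; exact hdet0)
  have huu0 : u₀ ⬝ᵥ u₀ ≠ 0 := fun h => hu₀0 (hmem u₀ hu₀ h)
  obtain ⟨s, hs⟩ := IsAlgClosed.exists_pow_nat_eq (k := ℂ) (u₀ ⬝ᵥ u₀) zero_lt_two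
  have hs0 : s ≠ 0 := fun h => huu0 (by rw [← hs, h]; ring)
  set u : Fin 3 → ℂ := s⁻¹ • u₀ with hudef
  have hu : Xᵀ.mulVec u = 0 := by rw [hudef, mulVec_smul, hu₀, smul_zero]
  have huu : u ⬝ᵥ u = 1 := by
    rw [hudef, smul_dotProduct, dotProduct_smul, smul_eq_mul, smul_eq_mul, ← hs]
    field_simp
  have hu0 : u ≠ 0 := fun h => zero_ne_one (by rw [h, zero_dotProduct] at huu; exact huu)
  -- vector spanning ker X
  obtain ⟨n, hn0, hn⟩ := (Matrix.exists_mulVec_eq_zero_iff).mpr hdet0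
  have hkerX : ∀ v : Fin 3 → ℂ, X.mulVec v = 0 → ∃ c : ℂ, v = c • n :=
    fun v hv => aux_kerX_dep X hker hu hu0 hn hn0 hv
  -- key: (YᵀY) w = 0 implies X w = 0
  have hkey : ∀ w : Fin 3 → ℂ, Yᵀ.mulVec (Y.mulVec w) = 0 → X.mulVec w = 0 := by
    intro w hw
    have h1 : Xᵀ.mulVec (X.mulVec w) = 0 := by
      rw [mulVec_mulVec, hW, ← mulVec_mulVec]; exact hw
    have h2 : (X.mulVec w) ⬝ᵥ (X.mulVec w) = 0 := by
      rw [dotProduct_mulVec, ← mulVec_transpose, h1, zero_dotProduct]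
    exact hmem _ h1 h2
  have hYn : Y.mulVec n = 0 := by
    obtain ⟨w, hw0, hw⟩ := (Matrix.exists_mulVec_eq_zero_iff).mpr hdetY0
    have hXw : X.mulVec w = 0 := hkey w (by rw [hw, mulVec_zero])
    obtain ⟨c, hc⟩ := hkerX w hXw
    have hc0 : c ≠ 0 := fun h => hw0 (by rw [hc, h, zero_smul])
    have hnw : n = c⁻¹ • w := by rw [hc, smul_smul, inv_mul_cancel₀ hc0, one_smul]
    rw [hnw, mulVec_smul, hw, smul_zero]
  -- normalized vector spanning ker Yᵀ
  obtain ⟨u'₀, hu'₀0, hu'₀⟩ := (Matrix.exists_mulVec_eq_zero_iff).mpr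
    (show Yᵀ.det = 0 by rw [det_transpose]; exact hdetY0)
  have h'aniso : u'₀ ⬝ᵥ u'₀ ≠ 0 := aux_aniso X Y hW hker hu hu0 hn hn0 hYn hu'₀ hu'₀0
  obtain ⟨t, ht⟩ := IsAlgClosed.exists_pow_nat_eq (k := ℂ) (u'₀ ⬝ᵥ u'₀) zero_lt_two
  have ht0 : t ≠ 0 := fun h => h'aniso (by rw [← ht, h]; ring)
  set u' : Fin 3 → ℂ := t⁻¹ • u'₀ with hu'def
  have hu' : Yᵀ.mulVec u' = 0 := by rw [hu'def, mulVec_smul, hu'₀, smul_zero]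
  have hu'u' : u' ⬝ᵥ u' = 1 := by
    rw [hu'def, smul_dotProduct, dotProduct_smul, smul_eq_mul, smul_eq_mul, ← ht]
    field_simp
  -- choice of m
  obtain ⟨i, hi⟩ : ∃ i, n i ≠ 0 := by
    by_contra h; push_neg at h; exact hn0 (funext h)
  set m : Fin 3 → ℂ := Pi.single i (1 : ℂ) with hmdef
  have hmn : m ⬝ᵥ n ≠ 0 := by rw [hmdef, single_dotProduct, one_mul]; exact hi
  have hX1unit := aux_pert_unit X hu huu hkerX hmn
  -- determinant comparison
  have hsq : ((Y + vecMulVec u' m).det - (X + vecMulVec u m).det) *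
      ((Y + vecMulVec u' m).det + (X + vecMulVec u m).det) = 0 := by
    have h3 : (X + vecMulVec u m)ᵀ * (X + vecMulVec u m)
        = (Y + vecMulVec u' m)ᵀ * (Y + vecMulVec u' m) := by
      rw [aux_pert_gram X m hu huu, aux_pert_gram Y m hu' hu'u', hW]
    have h4 := congrArg det h3
    rw [det_mul, det_mul, det_transpose, det_transpose] at h4
    linear_combination -h4
  have hS : ∃ S : Matrix (Fin 3) (Fin 3) ℂ, Sᵀ * S = 1 ∧ S.det = 1 ∧ Y = S * X := by
    rcases mul_eq_zero.mp hsq with h | h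
    · exact aux_exist X Y hW hu huu hu' hu'u' hkerX hmn (by linear_combination h)
    · have hnu' : Yᵀ.mulVec (-u') = 0 := by rw [mulVec_neg, hu', neg_zero]
      have hnu'u' : (-u') ⬝ᵥ (-u') = 1 := by rw [neg_dotProduct, dotProduct_neg, neg_neg]; exact hu'u'
      have hneg : Y + vecMulVec (-u') m = Y - vecMulVec u' m := by
        have : vecMulVec (-u') m = -vecMulVec u' m := by
          have := aux_vecMulVec_smul_left (-1 : ℂ) u' m
          simpa using this
        rw [this, sub_eq_add_neg]
      have hd2 : (Y + vecMulVec (-u') m).det = (X + vecMulVec u m).det := by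
        rw [hneg, aux_flip Y m hu' hu'u']
        linear_combination -h
      exact aux_exist X Y hW hu huu hnu' hnu'u' hkerX hmn hd2
  obtain ⟨S, hS1, hS2, hS3⟩ := hS
  have hSST : S * Sᵀ = 1 := mul_eq_one_comm.mp hS1
  refine ⟨S, ⟨hS1, hS2, hS3⟩, ?_⟩
  rintro T ⟨hT1, hT2, hT3⟩
  have hR : (Sᵀ * T)ᵀ * (Sᵀ * T) = 1 := by
    rw [transpose_mul, transpose_transpose, mul_assoc, ← mul_assoc S, hSST, one_mul, hT1]
  have hRdet : (Sᵀ * T).det = 1 := by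
    rw [det_mul, det_transpose, hS2, hT2, one_mul]
  have hRX : (Sᵀ * T) * X = X := by
    rw [mul_assoc, ← hT3, hS3, ← mul_assoc, hS1, one_mul]
  have hid : Sᵀ * T = 1 := aux_uniq X hker hu huu hX1unit hR hRdet hRX
  calc T = (S * Sᵀ) * T := by rw [hSST, one_mul]
  _ = S * (Sᵀ * T) := by rw [mul_assoc]
  _ = S := by rw [hid, mul_one]
end

section
/- Let X be a 3×3 complex matrix with rank X ≥ 2. Then ker(Xᵀ) ∩ im X = ker(Xᵀ) ∩ L, where L = {v ∈ ℂ³ : ⟨v,v⟩ = 0} is the isotropic cone of the standard complex bilinear form. -/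
open Matrix

noncomputable def dotB : LinearMap.BilinForm ℂ (Fin 3 → ℂ) :=
  LinearMap.mk₂ ℂ (· ⬝ᵥ ·)
    (fun _ _ _ => add_dotProduct _ _ _)
    (fun _ _ _ => smul_dotProduct _ _ _)
    (fun _ _ _ => dotProduct_add _ _ _)
    (fun _ _ _ => dotProduct_smul _ _ _)

lemma dotB_apply (x y : Fin 3 → ℂ) : dotB x y = x ⬝ᵥ y := rfl

lemma dotB_refl : dotB.IsRefl := by
  intro x y h
  rw [dotB_apply] at h ⊢
  rwa [dotProduct_comm]

lemma dotB_nondegenerate : dotB.Nondegenerate := by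
  refine (LinearMap.IsRefl.nondegenerate_iff_separatingLeft dotB_refl).mpr ?_
  intro x hx
  ext i
  simpa [dotB_apply] using hx (Pi.single i 1)

theorem stmt3 (X : Matrix (Fin 3) (Fin 3) ℂ) (hrank : 2 ≤ X.rank) :
    {v : Fin 3 → ℂ | Xᵀ.mulVec v = 0 ∧ v ∈ LinearMap.range (X.mulVecLin)} =
      {v : Fin 3 → ℂ | Xᵀ.mulVec v = 0 ∧ v ⬝ᵥ v = 0} := by
  classical
  set K : Submodule ℂ (Fin 3 → ℂ) := LinearMap.ker Xᵀ.mulVecLin with hK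
  -- range X = orthogonal complement of K
  have hsub : LinearMap.range X.mulVecLin ≤ dotB.orthogonal K := by
    rintro _ ⟨w, rfl⟩
    intro n hn
    have hn' : Xᵀ.mulVec n = 0 := hn
    show dotB n (X.mulVecLin w) = 0
    rw [dotB_apply, Matrix.mulVecLin_apply, Matrix.dotProduct_mulVec,
      ← Matrix.mulVec_transpose, hn', zero_dotProduct]
  have hKrank : Module.finrank ℂ K + Xᵀ.rank = 3 := by
    rw [hK, Matrix.rank]
    have := LinearMap.finrank_range_add_finrank_ker Xᵀ.mulVecLin
    simp only [Module.finrank_fintype_fun_eq_card, Fintype.card_fin] at this ⊢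
    omega
  have hXT : Xᵀ.rank = X.rank := Matrix.rank_transpose X
  have hrank3 : X.rank ≤ 3 := by
    simpa using Matrix.rank_le_card_width X
  have hfin : Module.finrank ℂ (dotB.orthogonal K) = X.rank := by
    rw [LinearMap.BilinForm.finrank_orthogonal dotB_nondegenerate]
    simp only [Module.finrank_fintype_fun_eq_card, Fintype.card_fin]
    omega
  have hrangefin : Module.finrank ℂ (LinearMap.range X.mulVecLin) = X.rank := rfl
  have hW : LinearMap.range X.mulVecLin = dotB.orthogonal K :=
    Submodule.eq_of_le_of_finrank_le hsub (by rw [hfin, hrangefin])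
  ext v
  simp only [Set.mem_setOf_eq, and_congr_right_iff]
  intro hv
  have hvK : v ∈ K := hv
  constructor
  · rintro ⟨w, rfl⟩
    rw [Matrix.mulVecLin_apply] at hv ⊢
    rw [Matrix.dotProduct_mulVec, ← Matrix.mulVec_transpose, hv, zero_dotProduct]
  · intro hvv
    rw [hW]
    intro n hn
    -- K has dimension ≤ 1
    by_cases hv0 : v = 0
    · show dotB n v = 0
      simp [hv0, dotB_apply]
    · have hKle : Module.finrank ℂ K ≤ 1 := by omega
      have hspan : Submodule.span ℂ {v} = K := by
        apply Submodule.eq_of_le_of_finrank_le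
        · rwa [Submodule.span_singleton_le_iff_mem]
        · rwa [finrank_span_singleton hv0]
      rw [← hspan, Submodule.mem_span_singleton] at hn
      obtain ⟨c, rfl⟩ := hn
      show dotB (c • v) v = 0
      rw [dotB_apply, smul_dotProduct, hvv, smul_zero]
end

section
/- Let P₁, P₂, P₃ ∈ SL(2,ℂ) and set P₀ = Id. Form the 4×4 complex matrix T with entries T_{ij} = ⟨Pᵢ, Pⱼ⟩ where ⟨x,y⟩ = (1/2)trace(x·adj(y)) (indices 0..3). Then the group generated by P₁, P₂, P₃ is irreducible (i.e., no common eigenline of all elements) if and only if rank T ≥ 3. -/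
open Matrix

namespace Stmt10Aux

noncomputable section

abbrev V := Matrix (Fin 2) (Fin 2) ℂ

/-- The bilinear form. -/
def B (A C : V) : ℂ := (1/2 : ℂ) * ((A * C.adjugate).trace)

lemma B_eq (A C : V) :
    B A C = (1/2 : ℂ) * (A 0 0 * C 1 1 + A 1 1 * C 0 0 - A 0 1 * C 1 0 - A 1 0 * C 0 1) := by
  simp [B, adjugate_fin_two, trace_fin_two, mul_apply, Fin.sum_univ_two]
  ring

/-- eigenvector implies char poly relation -/
lemma eig_det (X : V) (ℓ : Fin 2 → ℂ) (μ : ℂ) (hℓ : ℓ ≠ 0)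
    (h : X.mulVec ℓ = μ • ℓ) : X.det = μ * (X.trace - μ) := by
  have h0 : X 0 0 * ℓ 0 + X 0 1 * ℓ 1 = μ * ℓ 0 := by
    have := congrFun h 0
    simpa [mulVec, dotProduct, Fin.sum_univ_two] using this
  have h1 : X 1 0 * ℓ 0 + X 1 1 * ℓ 1 = μ * ℓ 1 := by
    have := congrFun h 1
    simpa [mulVec, dotProduct, Fin.sum_univ_two] using this
  have hℓ' : ℓ 0 ≠ 0 ∨ ℓ 1 ≠ 0 := by
    by_contra hc
    push_neg at hc
    exact hℓ (funext fun i => by fin_cases i <;> simp [hc.1, hc.2])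
  have key0 : (X.det - μ * (X.trace - μ)) * ℓ 0 = 0 := by
    rw [det_fin_two, trace_fin_two]
    linear_combination (X 1 1 - μ) * h0 - X 0 1 * h1
  have key1 : (X.det - μ * (X.trace - μ)) * ℓ 1 = 0 := by
    rw [det_fin_two, trace_fin_two]
    linear_combination (X 0 0 - μ) * h1 - X 1 0 * h0
  rcases hℓ' with h' | h'
  · have := mul_eq_zero.mp key0
    rcases this with h'' | h''
    · exact sub_eq_zero.mp h''
    · exact absurd h'' h'
  · have := mul_eq_zero.mp key1
    rcases this with h'' | h''
    · exact sub_eq_zero.mp h''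
    · exact absurd h'' h'


lemma mulVec_comp (A : V) (ℓ : Fin 2 → ℂ) (μ : ℂ) (h : A.mulVec ℓ = μ • ℓ) :
    (A 0 0 * ℓ 0 + A 0 1 * ℓ 1 = μ * ℓ 0) ∧ (A 1 0 * ℓ 0 + A 1 1 * ℓ 1 = μ * ℓ 1) := by
  constructor
  · have := congrFun h 0
    simpa [mulVec, dotProduct, Fin.sum_univ_two] using this
  · have := congrFun h 1
    simpa [mulVec, dotProduct, Fin.sum_univ_two] using this

/-- common eigenvector gives an isotropic perp vector -/
lemma eig_to_perp (w : Fin 4 → V) (ℓ : Fin 2 → ℂ) (hℓ : ℓ ≠ 0)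
    (h : ∀ i, ∃ μ : ℂ, (w i).mulVec ℓ = μ • ℓ) :
    ∃ N : V, N ≠ 0 ∧ N.det = 0 ∧ ∀ i, B (w i) N = 0 := by
  refine ⟨!![ℓ 0 * (-(ℓ 1)), ℓ 0 * ℓ 0; ℓ 1 * (-(ℓ 1)), ℓ 1 * ℓ 0], ?_, ?_, ?_⟩
  · intro hN
    apply hℓ
    have e01 : ℓ 0 * ℓ 0 = 0 := by
      have := congrFun (congrFun hN 0) 1
      simpa using this
    have e10 : ℓ 1 * (-(ℓ 1)) = 0 := by
      have := congrFun (congrFun hN 1) 0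
      simpa using this
    have h0 : ℓ 0 = 0 := by rcases mul_eq_zero.mp e01 with h' | h' <;> exact h'
    have h1 : ℓ 1 = 0 := by
      rcases mul_eq_zero.mp e10 with h' | h'
      · exact h'
      · simpa using h'
    funext k
    fin_cases k <;> simp [h0, h1]
  · simp [det_fin_two]; ring
  · intro i
    obtain ⟨μ, hμ⟩ := h i
    obtain ⟨h0, h1⟩ := mulVec_comp _ _ _ hμ
    rw [B_eq]
    simp only [cons_val', cons_val_zero, cons_val_one, head_cons, head_fin_const, empty_val',
      cons_val_fin_one, of_apply]
    linear_combination (1/2 : ℂ) * ℓ 1 * h0 - (1/2 : ℂ) * ℓ 0 * h1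

/-- isotropic perp vector gives common eigenvector -/
lemma perp_to_eig (w : Fin 4 → V) (hw0 : w 0 = 1) (N : V) (hN : N ≠ 0) (hdet : N.det = 0)
    (hperp : ∀ i, B (w i) N = 0) :
    ∃ ℓ : Fin 2 → ℂ, ℓ ≠ 0 ∧ ∀ i, ∃ μ : ℂ, (w i).mulVec ℓ = μ • ℓ := by
  have htr : N 1 1 = -(N 0 0) := by
    have := hperp 0
    rw [hw0, B_eq] at this
    simp [one_apply] at this
    linear_combination this
  have hpq : N 0 0 ^ 2 + N 0 1 * N 1 0 = 0 := by
    rw [det_fin_two, htr] at hdet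
    linear_combination -hdet
  have hB : ∀ i, (w i 1 1 - w i 0 0) * N 0 0 - w i 0 1 * N 1 0 - w i 1 0 * N 0 1 = 0 := by
    intro i
    have := hperp i
    rw [B_eq, htr] at this
    linear_combination 2 * this
  by_cases hq : N 0 1 ≠ 0
  · refine ⟨![N 0 1, -(N 0 0)], ?_, ?_⟩
    · intro hc
      exact hq (by simpa using congrFun hc 0)
    · intro i
      refine ⟨(w i 0 0 * N 0 1 - w i 0 1 * N 0 0) / N 0 1, ?_⟩
      funext k
      fin_cases k <;>
        simp only [mulVec, dotProduct, Fin.sum_univ_two, Pi.smul_apply, smul_eq_mul,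
          Fin.mk_zero, Fin.mk_one, cons_val_zero, cons_val_one, head_cons, Fin.isValue] <;>
        rw [div_mul_eq_mul_div, eq_div_iff hq]
      · ring
      · linear_combination (-(N 0 1)) * hB i + (-(w i 0 1)) * hpq
  · push_neg at hq
    have hp : N 0 0 = 0 := by
      have h2 : N 0 0 ^ 2 = 0 := by linear_combination hpq - N 1 0 * hq
      exact pow_eq_zero_iff two_ne_zero |>.mp h2
    have hr : N 1 0 ≠ 0 := by
      intro hr
      apply hN
      ext i j
      fin_cases i <;> fin_cases j <;> simp [hp, hq, hr, htr]
    refine ⟨![0, 1], ?_, ?_⟩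
    · intro hc
      simpa using congrFun hc 1
    · intro i
      have hb := hB i
      have hqr : w i 0 1 * N 1 0 = 0 := by linear_combination -hb + (w i 1 1 - w i 0 0) * hp - w i 1 0 * hq
      have hw01 : w i 0 1 = 0 := by
        rcases mul_eq_zero.mp hqr with h' | h'
        · exact h'
        · exact absurd h' hr
      refine ⟨w i 1 1, ?_⟩
      funext k
      fin_cases k <;> simp [mulVec, dotProduct, Fin.sum_univ_two, hw01]


/-- adjugate of a 2x2 matrix via trace -/
lemma adj_eq (A : V) : A.adjugate = A.trace • (1 : V) - A := by
  rw [adjugate_fin_two]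
  ext i j
  fin_cases i <;> fin_cases j <;>
    simp [trace_fin_two, one_apply] <;> ring

lemma closure_eig (P₁ P₂ P₃ : Matrix.SpecialLinearGroup (Fin 2) ℂ) (ℓ : Fin 2 → ℂ) (hℓ : ℓ ≠ 0)
    (h1 : ∃ μ : ℂ, (P₁ : V).mulVec ℓ = μ • ℓ)
    (h2 : ∃ μ : ℂ, (P₂ : V).mulVec ℓ = μ • ℓ)
    (h3 : ∃ μ : ℂ, (P₃ : V).mulVec ℓ = μ • ℓ) :
    ∀ g ∈ Subgroup.closure {P₁, P₂, P₃}, ∃ μ : ℂ, (g : V).mulVec ℓ = μ • ℓ := by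
  intro g hg
  induction hg using Subgroup.closure_induction with
  | mem x hx =>
    rcases hx with h | h | h
    · subst h; exact h1
    · subst h; exact h2
    · subst h; exact h3
  | one => exact ⟨1, by simp⟩
  | mul x y hx hy ihx ihy =>
    obtain ⟨μ, hμ⟩ := ihx
    obtain ⟨ν, hν⟩ := ihy
    refine ⟨μ * ν, ?_⟩
    have : ((x * y : Matrix.SpecialLinearGroup (Fin 2) ℂ) : V) = (x : V) * (y : V) := rfl
    rw [this, ← mulVec_mulVec, hν, mulVec_smul, hμ, smul_smul, mul_comm]
  | inv x hx ihx =>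
    obtain ⟨μ, hμ⟩ := ihx
    have hμ0 : μ ≠ 0 := by
      intro h0
      apply hℓ
      rw [h0, zero_smul] at hμ
      have : ((x⁻¹ : Matrix.SpecialLinearGroup (Fin 2) ℂ) : V).mulVec ((x : V).mulVec ℓ) = ℓ := by
        rw [mulVec_mulVec, show ((x⁻¹ : Matrix.SpecialLinearGroup (Fin 2) ℂ) : V) * (x : V)
          = ((x⁻¹ * x : Matrix.SpecialLinearGroup (Fin 2) ℂ) : V) from rfl, inv_mul_cancel]
        simp
      rw [hμ] at this
      rw [← this]
      simp
    refine ⟨μ⁻¹, ?_⟩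
    have key : ((x⁻¹ : Matrix.SpecialLinearGroup (Fin 2) ℂ) : V).mulVec ((x : V).mulVec ℓ) = ℓ := by
      rw [mulVec_mulVec, show ((x⁻¹ : Matrix.SpecialLinearGroup (Fin 2) ℂ) : V) * (x : V)
        = ((x⁻¹ * x : Matrix.SpecialLinearGroup (Fin 2) ℂ) : V) from rfl, inv_mul_cancel]
      simp
    rw [hμ, mulVec_smul] at key
    have := congrArg (fun z => μ⁻¹ • z) key
    simpa [smul_smul, inv_mul_cancel₀ hμ0, inv_mul_cancel_left₀ hμ0] using this

/-- aux: rank of a sum -/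
lemma rank_add_le' (A C : Matrix (Fin 4) (Fin 4) ℂ) : (A + C).rank ≤ A.rank + C.rank := by
  rw [Matrix.rank, Matrix.rank, Matrix.rank, mulVecLin_add]
  have hle : LinearMap.range (A.mulVecLin + C.mulVecLin) ≤
      LinearMap.range A.mulVecLin ⊔ LinearMap.range C.mulVecLin := by
    rintro _ ⟨x, rfl⟩
    exact Submodule.add_mem_sup ⟨x, rfl⟩ ⟨x, rfl⟩
  calc Module.finrank ℂ (LinearMap.range (A.mulVecLin + C.mulVecLin))
      ≤ Module.finrank ℂ ↥(LinearMap.range A.mulVecLin ⊔ LinearMap.range C.mulVecLin) :=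
        Submodule.finrank_mono hle
    _ ≤ Module.finrank ℂ (LinearMap.range A.mulVecLin)
        + Module.finrank ℂ (LinearMap.range C.mulVecLin) := by
        have := Submodule.finrank_sup_add_finrank_inf_eq
          (LinearMap.range A.mulVecLin) (LinearMap.range C.mulVecLin)
        omega

lemma rank_vecMulVec_le (u v : Fin 4 → ℂ) : (vecMulVec u v).rank ≤ 1 := by
  rw [vecMulVec_eq (Fin 1)]
  calc (replicateCol (Fin 1) u * replicateRow (Fin 1) v).rank ≤ (replicateRow (Fin 1) v).rank := rank_mul_le_right _ _
    _ ≤ 1 := by simpa using rank_le_card_height (replicateRow (Fin 1) v)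

/-- C1: common eigenvector implies Gram rank at most 2 -/
lemma rank_le_two (w : Fin 4 → V) (hdet : ∀ i, (w i).det = 1) (ℓ : Fin 2 → ℂ) (hℓ : ℓ ≠ 0)
    (h : ∀ i, ∃ μ : ℂ, (w i).mulVec ℓ = μ • ℓ) :
    (Matrix.of fun i j : Fin 4 => B (w i) (w j)).rank ≤ 2 := by
  choose μ hμ using h
  set ν : Fin 4 → ℂ := fun i => (w i).trace - μ i with hν
  have hmn : ∀ i, μ i * ν i = 1 := by
    intro i
    have := eig_det (w i) ℓ (μ i) hℓ (hμ i)
    rw [hdet i] at this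
    exact this.symm
  have hadj : ∀ j, ((w j).adjugate).mulVec ℓ = ν j • ℓ := by
    intro j
    rw [adj_eq, sub_mulVec, smul_mulVec, one_mulVec, hμ j, hν, sub_smul]
  have hentry : ∀ i j, B (w i) (w j) = (1/2 : ℂ) * (μ i * ν j + ν i * μ j) := by
    intro i j
    set X : V := w i * (w j).adjugate with hX
    have hXe : X.mulVec ℓ = (μ i * ν j) • ℓ := by
      rw [hX, ← mulVec_mulVec, hadj j, mulVec_smul, hμ i, smul_smul, mul_comm]
    have hXdet : X.det = 1 := by
      rw [hX, det_mul, det_adjugate, hdet i, hdet j]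
      simp
    have := eig_det X ℓ (μ i * ν j) hℓ hXe
    rw [hXdet] at this
    have hprod : (μ i * ν j) * (ν i * μ j) = 1 := by
      linear_combination (μ j * ν j) * hmn i + hmn j
    have hne : μ i * ν j ≠ 0 := by
      intro h0
      rw [h0, zero_mul] at hprod
      exact zero_ne_one hprod
    have htr : X.trace = μ i * ν j + ν i * μ j := by
      have h2 : (μ i * ν j) * X.trace = (μ i * ν j) * (μ i * ν j + ν i * μ j) := by
        linear_combination -this - hprod
      exact mul_left_cancel₀ hne h2
    rw [B, ← hX, htr]
  have hT : (Matrix.of fun i j : Fin 4 => B (w i) (w j))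
      = ((1/2 : ℂ) • (1 : Matrix (Fin 4) (Fin 4) ℂ)) * (vecMulVec μ ν + vecMulVec ν μ) := by
    ext i j
    rw [smul_mul_assoc, one_mul]
    simp [hentry i j, vecMulVec_apply]
  rw [hT]
  calc (((1/2 : ℂ) • (1 : Matrix (Fin 4) (Fin 4) ℂ)) * (vecMulVec μ ν + vecMulVec ν μ)).rank
      ≤ (vecMulVec μ ν + vecMulVec ν μ).rank := rank_mul_le_right _ _
    _ ≤ (vecMulVec μ ν).rank + (vecMulVec ν μ).rank := rank_add_le' _ _
    _ ≤ 2 := by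
        have := rank_vecMulVec_le μ ν
        have := rank_vecMulVec_le ν μ
        omega


lemma basis_pair_ne_zero {ι : Type*} [DecidableEq ι] {Mod : Type*} [AddCommGroup Mod]
    [Module ℂ Mod] (b : Module.Basis ι ℂ Mod) {i j : ι} (hij : i ≠ j) (t : ℂ) :
    t • b i + b j ≠ 0 := by
  intro h
  have h0 := congrArg (fun z => b.repr z j) h
  simp only [map_add, _root_.map_smul, Module.Basis.repr_self, map_zero, Finsupp.coe_add,
    Finsupp.coe_smul, Pi.add_apply, Pi.smul_apply, Finsupp.coe_zero, Pi.zero_apply,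
    smul_eq_mul, Finsupp.single_apply] at h0
  rw [if_neg hij] at h0
  norm_num at h0

lemma quad_root (a c e : ℂ) (ha : a ≠ 0) : ∃ t : ℂ, a * t ^ 2 + c * t + e = 0 := by
  obtain ⟨z, hz⟩ := IsAlgClosed.exists_pow_nat_eq (c ^ 2 - 4 * a * e) (n := 2) (by norm_num)
  refine ⟨(-c + z) / (2 * a), ?_⟩
  field_simp
  ring_nf
  linear_combination hz

/-- C2 core: abstract matrix lemma -/
lemma exists_isotropic (M J : Matrix (Fin 4) (Fin 4) ℂ) (h : (M * J * Mᵀ).rank ≤ 2) :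
    ∃ x : Fin 4 → ℂ, x ≠ 0 ∧ (M * J).mulVec x = 0 ∧ x ⬝ᵥ J.mulVec x = 0 := by
  set L := (M * J).mulVecLin with hL
  set W := LinearMap.range (Mᵀ.mulVecLin) with hW
  have hWrank : Module.finrank ℂ W = M.rank := by
    rw [hW, ← Matrix.rank, rank_transpose]
  have hrange : (M * J * Mᵀ).rank = Module.finrank ℂ (W.map L) := by
    rw [Matrix.rank, mulVecLin_mul, LinearMap.range_comp, ← hL, ← hW]
  have hkermem : ∀ x : Fin 4 → ℂ, x ∈ LinearMap.ker L → (M * J).mulVec x = 0 := by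
    intro x hx
    have : L x = 0 := hx
    rwa [hL, mulVecLin_apply] at this
  by_cases hMr : 3 ≤ M.rank
  · -- big rank: intersection of W and ker L is nonzero
    have hne : W ⊓ LinearMap.ker L ≠ ⊥ := by
      intro hbot
      have hinj : Function.Injective (L.domRestrict W) := by
        rw [← LinearMap.ker_eq_bot]
        rw [Submodule.eq_bot_iff]
        rintro ⟨x, hxW⟩ hx
        have hx' : L x = 0 := hx
        have : x ∈ W ⊓ LinearMap.ker L := ⟨hxW, hx'⟩
        rw [hbot] at this
        exact Subtype.ext (by simpa using this)
      have h3 : Module.finrank ℂ (LinearMap.range (L.domRestrict W)) = Module.finrank ℂ W :=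
        LinearMap.finrank_range_of_inj hinj
      rw [LinearMap.range_domRestrict] at h3
      rw [hrange, h3, hWrank] at h
      omega
    obtain ⟨x, hxmem, hx0⟩ := (Submodule.ne_bot_iff _).mp hne
    obtain ⟨hxW, hxker⟩ := hxmem
    refine ⟨x, hx0, hkermem x hxker, ?_⟩
    obtain ⟨y, hy⟩ := hxW
    have hy' : x = y ᵥ* M := by rw [← hy]; simp [mulVecLin_apply, mulVec_transpose]
    have hker : (M * J).mulVec x = 0 := hkermem x hxker
    calc x ⬝ᵥ J.mulVec x = (y ᵥ* M) ⬝ᵥ J.mulVec x := by rw [← hy']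
      _ = y ⬝ᵥ (M * J).mulVec x := by
          rw [dotProduct_mulVec, dotProduct_mulVec, vecMul_vecMul]
      _ = 0 := by rw [hker, dotProduct_zero]
  · -- small rank: ker L is at least 2-dimensional
    push_neg at hMr
    have hker2 : 2 ≤ Module.finrank ℂ (LinearMap.ker L) := by
      have hrn := LinearMap.finrank_range_add_finrank_ker L
      have h4 : Module.finrank ℂ (Fin 4 → ℂ) = 4 := by
        simp [Module.finrank_fintype_fun_eq_card]
      have hle : (M * J).rank ≤ M.rank := rank_mul_le_left M J
      rw [Matrix.rank, ← hL] at hle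
      omega
    let b : Module.Basis (Fin (Module.finrank ℂ (LinearMap.ker L))) ℂ (LinearMap.ker L) :=
      Module.finBasis ℂ (LinearMap.ker L)
    have h01 : (⟨0, by omega⟩ : Fin (Module.finrank ℂ (LinearMap.ker L)))
        ≠ ⟨1, by omega⟩ := by
      intro hc
      simpa using congrArg Fin.val hc
    obtain ⟨u, hu⟩ : ∃ u : LinearMap.ker L, u = b ⟨0, by omega⟩ := ⟨_, rfl⟩
    obtain ⟨v, hv⟩ : ∃ v : LinearMap.ker L, v = b ⟨1, by omega⟩ := ⟨_, rfl⟩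
    have hvne : ∀ t : ℂ, t • u + v ≠ 0 := by
      intro t
      rw [hu, hv]
      exact basis_pair_ne_zero b h01 t
    have hune : u ≠ 0 := by rw [hu]; exact b.ne_zero _
    by_cases hα0 : (u : Fin 4 → ℂ) ⬝ᵥ J.mulVec (u : Fin 4 → ℂ) = 0
    · exact ⟨(u : Fin 4 → ℂ), fun hc => hune (Subtype.ext hc), hkermem _ u.2, hα0⟩
    · obtain ⟨t, hroot⟩ := quad_root ((u : Fin 4 → ℂ) ⬝ᵥ J.mulVec (u : Fin 4 → ℂ))
        ((u : Fin 4 → ℂ) ⬝ᵥ J.mulVec (v : Fin 4 → ℂ)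
          + (v : Fin 4 → ℂ) ⬝ᵥ J.mulVec (u : Fin 4 → ℂ))
        ((v : Fin 4 → ℂ) ⬝ᵥ J.mulVec (v : Fin 4 → ℂ)) hα0
      refine ⟨t • (u : Fin 4 → ℂ) + (v : Fin 4 → ℂ), ?_, ?_, ?_⟩
      · intro hc
        apply hvne t
        apply Subtype.ext
        simpa using hc
      · have hmem : t • (u : Fin 4 → ℂ) + (v : Fin 4 → ℂ) ∈ LinearMap.ker L :=
          (LinearMap.ker L).add_mem ((LinearMap.ker L).smul_mem t u.2) v.2
        exact hkermem _ hmem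
      · rw [show (t • (u : Fin 4 → ℂ) + (v : Fin 4 → ℂ)) ⬝ᵥ
            J.mulVec (t • (u : Fin 4 → ℂ) + (v : Fin 4 → ℂ))
            = ((u : Fin 4 → ℂ) ⬝ᵥ J.mulVec (u : Fin 4 → ℂ)) * t ^ 2
            + ((u : Fin 4 → ℂ) ⬝ᵥ J.mulVec (v : Fin 4 → ℂ)
              + (v : Fin 4 → ℂ) ⬝ᵥ J.mulVec (u : Fin 4 → ℂ)) * t
            + ((v : Fin 4 → ℂ) ⬝ᵥ J.mulVec (v : Fin 4 → ℂ)) from by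
          simp only [mulVec_add, mulVec_smul, dotProduct_add, add_dotProduct,
            smul_dotProduct, dotProduct_smul, smul_eq_mul]
          ring]
        exact hroot


/-- vectorization of a 2x2 matrix -/
def vec (A : V) : Fin 4 → ℂ := ![A 0 0, A 0 1, A 1 0, A 1 1]

/-- the matrix of the bilinear form -/
def Jm : Matrix (Fin 4) (Fin 4) ℂ :=
  !![0, 0, 0, 1/2; 0, 0, -(1/2), 0; 0, -(1/2), 0, 0; 1/2, 0, 0, 0]

lemma B_vec (A C : V) : B A C = vec A ⬝ᵥ Jm.mulVec (vec C) := by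
  rw [B_eq]
  simp [vec, Jm, mulVec, dotProduct, Fin.sum_univ_four, Matrix.vecHead, Matrix.vecTail]
  ring

lemma det_vec (N : V) : N.det = vec N ⬝ᵥ Jm.mulVec (vec N) := by
  rw [det_fin_two]
  simp [vec, Jm, mulVec, dotProduct, Fin.sum_univ_four, Matrix.vecHead, Matrix.vecTail]
  ring

/-- the Gram matrix as a product -/
lemma gram_eq (w : Fin 4 → V) :
    (Matrix.of fun i j : Fin 4 => B (w i) (w j))
      = (Matrix.of fun i k : Fin 4 => vec (w i) k) * Jm
        * (Matrix.of fun i k : Fin 4 => vec (w i) k)ᵀ := by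
  ext i j
  simp only [of_apply]
  rw [B_vec]
  simp [mul_apply, mulVec, dotProduct, Fin.sum_univ_four, transpose_apply, vec, Jm,
    Matrix.vecHead, Matrix.vecTail]
  ring

lemma MJ_mulVec (w : Fin 4 → V) (N : V) (i : Fin 4) :
    (((Matrix.of fun i k : Fin 4 => vec (w i) k) * Jm).mulVec (vec N)) i = B (w i) N := by
  rw [B_vec]
  simp [mul_apply, mulVec, dotProduct, Fin.sum_univ_four, vec, Jm,
    Matrix.vecHead, Matrix.vecTail]
  ring

/-- combining: rank ≤ 2 gives an isotropic perp vector -/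
lemma rank_to_perp (w : Fin 4 → V)
    (h : (Matrix.of fun i j : Fin 4 => B (w i) (w j)).rank ≤ 2) :
    ∃ N : V, N ≠ 0 ∧ N.det = 0 ∧ ∀ i, B (w i) N = 0 := by
  rw [gram_eq] at h
  obtain ⟨x, hx0, hxker, hxiso⟩ := exists_isotropic _ _ h
  refine ⟨!![x 0, x 1; x 2, x 3], ?_, ?_, ?_⟩
  · intro hc
    apply hx0
    funext k
    fin_cases k
    · simpa using congrFun (congrFun hc 0) 0
    · simpa using congrFun (congrFun hc 0) 1
    · simpa using congrFun (congrFun hc 1) 0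
    · simpa using congrFun (congrFun hc 1) 1
  · have hvec : vec !![x 0, x 1; x 2, x 3] = x := by
      funext k
      fin_cases k <;> simp [vec]
    rw [det_vec, hvec]
    exact hxiso
  · intro i
    have hvec : vec !![x 0, x 1; x 2, x 3] = x := by
      funext k
      fin_cases k <;> simp [vec]
    rw [← MJ_mulVec w, hvec, hxker]
    simp


end
end Stmt10Aux

open Stmt10Aux in
theorem stmt10 (P₁ P₂ P₃ : Matrix.SpecialLinearGroup (Fin 2) ℂ) :
    (¬ ∃ ℓ : Fin 2 → ℂ, ℓ ≠ 0 ∧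
        ∀ g ∈ Subgroup.closure {P₁, P₂, P₃},
          ∃ μ : ℂ, (g : Matrix (Fin 2) (Fin 2) ℂ).mulVec ℓ = μ • ℓ) ↔
      3 ≤ (Matrix.of fun i j : Fin 4 =>
        (1/2 : ℂ) *
          (((![1, ↑P₁, ↑P₂, ↑P₃] : Fin 4 → Matrix (Fin 2) (Fin 2) ℂ) i) *
           ((![1, ↑P₁, ↑P₂, ↑P₃] : Fin 4 → Matrix (Fin 2) (Fin 2) ℂ) j).adjugate).trace).rank := by
  set w : Fin 4 → Matrix (Fin 2) (Fin 2) ℂ := ![1, ↑P₁, ↑P₂, ↑P₃] with hw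
  have hw0 : w 0 = 1 := rfl
  have hw1 : w 1 = ↑P₁ := rfl
  have hw2 : w 2 = ↑P₂ := rfl
  have hw3 : w 3 = ↑P₃ := rfl
  have hdet : ∀ i, (w i).det = 1 := by
    intro i
    fin_cases i
    · simp [hw]
    · simpa [hw] using P₁.prop
    · simpa [hw] using P₂.prop
    · simpa [hw] using P₃.prop
  have hTB : (Matrix.of fun i j : Fin 4 =>
      (1/2 : ℂ) * ((w i) * (w j).adjugate).trace)
      = Matrix.of fun i j : Fin 4 => B (w i) (w j) := rfl
  rw [hTB]
  have key : (∃ ℓ : Fin 2 → ℂ, ℓ ≠ 0 ∧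
      ∀ g ∈ Subgroup.closure {P₁, P₂, P₃},
        ∃ μ : ℂ, (g : Matrix (Fin 2) (Fin 2) ℂ).mulVec ℓ = μ • ℓ)
      ↔ (Matrix.of fun i j : Fin 4 => B (w i) (w j)).rank ≤ 2 := by
    constructor
    · rintro ⟨ℓ, hℓ, hcl⟩
      apply rank_le_two w hdet ℓ hℓ
      intro i
      fin_cases i
      · exact ⟨1, by simp [hw0]⟩
      · simpa [hw] using hcl P₁ (Subgroup.subset_closure (by simp))
      · simpa [hw] using hcl P₂ (Subgroup.subset_closure (by simp))
      · simpa [hw] using hcl P₃ (Subgroup.subset_closure (by simp))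
    · intro hrk
      obtain ⟨N, hN0, hNdet, hNperp⟩ := rank_to_perp w hrk
      obtain ⟨ℓ, hℓ, heig⟩ := perp_to_eig w hw0 N hN0 hNdet hNperp
      refine ⟨ℓ, hℓ, closure_eig P₁ P₂ P₃ ℓ hℓ ?_ ?_ ?_⟩
      · rw [← hw1]; exact heig 1
      · rw [← hw2]; exact heig 2
      · rw [← hw3]; exact heig 3
  exact (not_congr key).trans (by omega)
end
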